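/- arXiv:2305.08072 — 2 statements merged into one kernel-verified Lean document; each statement's English description precedes it below -/
import Mathlib

section
/- Let N, m, Sym_Ω be as in the mass-weighted setting and let 𝔘(r) = {σ ∈ Sym_Ω | ∃ A ∈ SO(3), t ∈ ℝ³, ∀ i, r (σ i) = A (r i) + √(m i) • t}. Then the symmetry number is well defined on (ℝ³)^N / (E⁺(3) × Sym_Ω): for every σ ∈ Sym_Ω, every proper Euclidean motion g = (t, A) with A ∈ SO(3), t ∈ ℝ³, and every configuration r, the cardinality of 𝔘(σ·(g·r)) equals the cardinality of 𝔘(r). -/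
/-- `ℝ³` as a Euclidean space. -/
noncomputable abbrev E3 : Type := EuclideanSpace ℝ (Fin 3)

/-- The mass-weighted proper Euclidean action of `g = (t, A)`:
`(g·r) i = A (r i) + √(m i) • t`. -/
noncomputable def euclAct (N : ℕ) (m : Fin N → ℝ) (A : Matrix (Fin 3) (Fin 3) ℝ)
    (t : E3) (r : Fin N → E3) : Fin N → E3 :=
  fun i => Matrix.toEuclideanLin A (r i) + Real.sqrt (m i) • t

/-- The permutation action on configurations: `(σ·r) i = r (σ i)`. -/
def permAct (N : ℕ) (σ : Equiv.Perm (Fin N)) (r : Fin N → E3) : Fin N → E3 :=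
  fun i => r (σ i)

/-- `𝔘(r)`: the set of permutations `σ ∈ Sym_Ω` such that `σ·r` lies in the mass-weighted
`E⁺(3)`-orbit of `r`. Its cardinality is the symmetry number of `r`. -/
noncomputable def USet (N : ℕ) (m : Fin N → ℝ) (SymΩ : Subgroup (Equiv.Perm (Fin N)))
    (r : Fin N → E3) : Set (Equiv.Perm (Fin N)) :=
  {σ | σ ∈ SymΩ ∧ ∃ A : Matrix (Fin 3) (Fin 3) ℝ,
    A ∈ Matrix.orthogonalGroup (Fin 3) ℝ ∧ A.det = 1 ∧
    ∃ t : E3, ∀ i, r (σ i) = Matrix.toEuclideanLin A (r i) + Real.sqrt (m i) • t}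

lemma tel_mul (X Y : Matrix (Fin 3) (Fin 3) ℝ) (v : E3) :
    Matrix.toEuclideanLin (X * Y) v = Matrix.toEuclideanLin X (Matrix.toEuclideanLin Y v) := by
  simp [Matrix.toEuclideanLin_apply, Matrix.mulVec_mulVec]

lemma tel_one (v : E3) : Matrix.toEuclideanLin (1 : Matrix (Fin 3) (Fin 3) ℝ) v = v := by
  simp [Matrix.toEuclideanLin_apply]

lemma star_mem_orth {A : Matrix (Fin 3) (Fin 3) ℝ} (hA : A ∈ Matrix.orthogonalGroup (Fin 3) ℝ) :
    star A ∈ Matrix.orthogonalGroup (Fin 3) ℝ := by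
  rw [Matrix.mem_unitaryGroup_iff, star_star]
  exact (Matrix.mem_unitaryGroup_iff' (A := A)).mp hA

lemma perm_apply_inv_self {α : Type*} (f : Equiv.Perm α) (x : α) : f (f⁻¹ x) = x :=
  f.apply_symm_apply x

lemma step (N : ℕ) (m : Fin N → ℝ) (SymΩ : Subgroup (Equiv.Perm (Fin N)))
    (hmass : ∀ σ ∈ SymΩ, ∀ i, m (σ i) = m i)
    (σ : Equiv.Perm (Fin N)) (hσ : σ ∈ SymΩ)
    (A : Matrix (Fin 3) (Fin 3) ℝ) (hA : A ∈ Matrix.orthogonalGroup (Fin 3) ℝ)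
    (hdet : A.det = 1) (t : E3) (r : Fin N → E3)
    (τ : Equiv.Perm (Fin N))
    (hτ : τ ∈ USet N m SymΩ (permAct N σ (euclAct N m A t r))) :
    σ * τ * σ⁻¹ ∈ USet N m SymΩ r := by
  obtain ⟨hτΩ, B, hB, hBdet, s, hs⟩ := hτ
  have hAA : star A * A = 1 := (Matrix.mem_unitaryGroup_iff' (A := A)).mp hA
  have hid : ∀ v : E3, Matrix.toEuclideanLin (star A) (Matrix.toEuclideanLin A v) = v := by
    intro v; rw [← tel_mul, hAA, tel_one]
  refine ⟨mul_mem (mul_mem hσ hτΩ) (inv_mem hσ), star A * B * A, ?_, ?_,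
    Matrix.toEuclideanLin (star A) (Matrix.toEuclideanLin B t + s - t), ?_⟩
  · exact mul_mem (mul_mem (star_mem_orth hA) hB) hA
  · simp [Matrix.det_mul, hdet, hBdet, Matrix.star_eq_conjTranspose, Matrix.det_conjTranspose]
  · intro j
    have h := hs (σ⁻¹ j)
    simp only [permAct, euclAct] at h
    have hsj : σ (σ⁻¹ j) = j := perm_apply_inv_self σ j
    have hmj : m (σ⁻¹ j) = m j := by
      conv_rhs => rw [← hsj]
      exact (hmass σ hσ (σ⁻¹ j)).symm ▸ (hmass σ hσ (σ⁻¹ j))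
    rw [hsj, hmass σ hσ, hmass τ hτΩ, hmj] at h
    -- h : A (r (σ (τ (σ⁻¹ j)))) + √(m j) • t = B (A (r j) + √(m j) • t) + √(m j) • s
    have h2 : Matrix.toEuclideanLin A (r (σ (τ (σ⁻¹ j))))
        = Matrix.toEuclideanLin B (Matrix.toEuclideanLin A (r j) + Real.sqrt (m j) • t)
          + Real.sqrt (m j) • s - Real.sqrt (m j) • t := by
      rw [← h]; abel
    have : (σ * τ * σ⁻¹) j = σ (τ (σ⁻¹ j)) := rfl
    rw [this, ← hid (r (σ (τ (σ⁻¹ j)))), h2]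
    simp only [tel_mul, map_add, map_sub, map_smul, smul_add, smul_sub]
    abel

/-- the symmetry number `|𝔘(r)|` is well defined on
`(ℝ³)^N / (E⁺(3) × Sym_Ω)`: acting on `r` by any `σ ∈ Sym_Ω` and any proper Euclidean motion
`g = (t, A)` does not change the cardinality of `𝔘`. -/
theorem symmetryNumber_welldefined (N : ℕ) (hN : 0 < N) (m : Fin N → ℝ) (hm : ∀ i, 0 < m i)
    (SymΩ : Subgroup (Equiv.Perm (Fin N))) (hmass : ∀ σ ∈ SymΩ, ∀ i, m (σ i) = m i)
    (σ : Equiv.Perm (Fin N)) (hσ : σ ∈ SymΩ)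
    (A : Matrix (Fin 3) (Fin 3) ℝ) (hA : A ∈ Matrix.orthogonalGroup (Fin 3) ℝ)
    (hdet : A.det = 1) (t : E3) (r : Fin N → E3) :
    Nat.card (USet N m SymΩ (permAct N σ (euclAct N m A t r)))
      = Nat.card (USet N m SymΩ r) := by
  set r' := permAct N σ (euclAct N m A t r) with hr'
  have hAA : star A * A = 1 := (Matrix.mem_unitaryGroup_iff' (A := A)).mp hA
  have hdet' : (star A).det = 1 := by
    simpa [Matrix.star_eq_conjTranspose, Matrix.det_conjTranspose] using hdet
  have hminv : ∀ i, m (σ⁻¹ i) = m i := by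
    intro i
    conv_rhs => rw [← perm_apply_inv_self σ i, hmass σ hσ]
  have hr : r = permAct N σ⁻¹ (euclAct N m (star A)
      (-(Matrix.toEuclideanLin (star A) t)) r') := by
    funext i
    simp only [permAct, euclAct, hr', perm_apply_inv_self, hminv,
      hmass σ hσ, map_add, map_smul]
    rw [← tel_mul, hAA, tel_one]
    simp [smul_neg]
  have fwd : ∀ τ ∈ USet N m SymΩ r', σ * τ * σ⁻¹ ∈ USet N m SymΩ r :=
    step N m SymΩ hmass σ hσ A hA hdet t r
  have bwd : ∀ τ ∈ USet N m SymΩ r, σ⁻¹ * τ * σ ∈ USet N m SymΩ r' := by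
    intro τ hτ
    have := step N m SymΩ hmass σ⁻¹ (inv_mem hσ) (star A) (star_mem_orth hA) hdet'
      (-(Matrix.toEuclideanLin (star A) t)) r' τ (by rwa [← hr])
    simpa using this
  have heq : USet N m SymΩ r' = (fun τ => σ⁻¹ * τ * σ) '' USet N m SymΩ r := by
    ext τ
    constructor
    · intro hτ
      exact ⟨σ * τ * σ⁻¹, fwd τ hτ, by group⟩
    · rintro ⟨τ', hτ', rfl⟩
      exact bwd τ' hτ'
  rw [heq]
  exact Nat.card_image_of_injective
    (fun a b h => by simpa [mul_assoc] using congrArg (fun x => σ * x * σ⁻¹) h) _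
end

section
/- Let G be a group acting on a finite type V, let k : V → V → ℝ satisfy k (σ • v) (σ • v') = k v v' for all σ ∈ G, and let X : ℝ → V → ℝ be such that for each v the function t ↦ X t v is differentiable with derivative ∑_{v' ∈ V} k v v' * X t v'. For each G-orbit O define Y t O = ∑_{v ∈ O} X t v, and choose for each orbit O' a representative c(O') ∈ O'. Then for each orbit O, the function t ↦ Y t O is differentiable and its derivative equals ∑_{O' orbit of V} (∑_{v ∈ O} k v (c O')) * Y t O'; moreover this expression is independent of the choice of representatives c. -/
open Finset

lemma key_sum_eq (G : Type*) [Group G] (V : Type*) [Fintype V] [MulAction G V]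
    [DecidableEq (Quotient (MulAction.orbitRel G V))]
    (k : V → V → ℝ) (hk : ∀ (σ : G) (v v' : V), k (σ • v) (σ • v') = k v v')
    (O : Quotient (MulAction.orbitRel G V)) (v₁ v₂ : V)
    (h : Quotient.mk (MulAction.orbitRel G V) v₁ = Quotient.mk (MulAction.orbitRel G V) v₂) :
    (∑ v ∈ univ.filter (fun v => Quotient.mk (MulAction.orbitRel G V) v = O), k v v₁)
      = ∑ v ∈ univ.filter (fun v => Quotient.mk (MulAction.orbitRel G V) v = O), k v v₂ := by
  have h' : (MulAction.orbitRel G V).r v₁ v₂ := Quotient.exact h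
  obtain ⟨σ, hσ⟩ : ∃ σ : G, σ • v₂ = v₁ := h'
  have hmem : ∀ (τ : G) (v : V), Quotient.mk (MulAction.orbitRel G V) (τ • v) = Quotient.mk (MulAction.orbitRel G V) v := by
    intro τ v
    exact Quotient.sound (MulAction.mem_orbit v τ)
  apply Finset.sum_nbij' (fun v => σ⁻¹ • v) (fun v => σ • v)
  · intro a ha
    simp only [mem_filter, mem_univ, true_and] at ha ⊢
    rw [← ha, hmem]
  · intro a ha
    simp only [mem_filter, mem_univ, true_and] at ha ⊢
    rw [← ha, hmem]
  · intro a _; simp [smul_smul]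
  · intro a _; simp [smul_smul]
  · intro a _
    rw [← hσ]
    rw [← hk σ (σ⁻¹ • a) v₂]
    simp [smul_smul]

/-- let `k` be a `G`-invariant rate matrix on a finite type `V` and let `X`
satisfy the absolute rate equation `dX_v/dt = ∑_{v'} k v v' * X_{v'}`. For each `G`-orbit `O`
(element of the orbit-space quotient) let `Y t O = ∑_{v ∈ O} X t v`, and choose a
representative `c O'` of each orbit `O'`. Then `t ↦ Y t O` is differentiable with derivative
`∑_{O'} (∑_{v ∈ O} k v (c O')) * Y t O'`, and the coefficients `∑_{v ∈ O} k v (c O')` do not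
depend on the choice of representatives `c`. -/
theorem reduced_rate_equation (G : Type*) [Group G] (V : Type*) [Fintype V] [MulAction G V]
    [DecidableEq (Quotient (MulAction.orbitRel G V))]
    [Fintype (Quotient (MulAction.orbitRel G V))]
    (k : V → V → ℝ) (hk : ∀ (σ : G) (v v' : V), k (σ • v) (σ • v') = k v v')
    (X : ℝ → V → ℝ)
    (hX : ∀ (v : V) (t : ℝ), HasDerivAt (fun t => X t v) (∑ v' : V, k v v' * X t v') t)
    (c : Quotient (MulAction.orbitRel G V) → V)
    (hc : ∀ O : Quotient (MulAction.orbitRel G V), Quotient.mk (MulAction.orbitRel G V) (c O) = O) :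
    (∀ (O : Quotient (MulAction.orbitRel G V)) (t : ℝ),
      HasDerivAt
        (fun t => ∑ v ∈ univ.filter (fun v => Quotient.mk (MulAction.orbitRel G V) v = O), X t v)
        (∑ O' : Quotient (MulAction.orbitRel G V),
          (∑ v ∈ univ.filter (fun v => Quotient.mk (MulAction.orbitRel G V) v = O), k v (c O')) *
          (∑ v' ∈ univ.filter (fun v' => Quotient.mk (MulAction.orbitRel G V) v' = O'), X t v'))
        t) ∧
    (∀ c' : Quotient (MulAction.orbitRel G V) → V,
      (∀ O : Quotient (MulAction.orbitRel G V), Quotient.mk (MulAction.orbitRel G V) (c' O) = O) →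
      ∀ O O' : Quotient (MulAction.orbitRel G V),
        (∑ v ∈ univ.filter (fun v => Quotient.mk (MulAction.orbitRel G V) v = O), k v (c O'))
          = (∑ v ∈ univ.filter (fun v => Quotient.mk (MulAction.orbitRel G V) v = O), k v (c' O'))) := by
  constructor
  · intro O t
    have h1 : HasDerivAt
        (fun t => ∑ v ∈ univ.filter (fun v => Quotient.mk (MulAction.orbitRel G V) v = O), X t v)
        (∑ v ∈ univ.filter (fun v => Quotient.mk (MulAction.orbitRel G V) v = O),
          ∑ v' : V, k v v' * X t v') t :=
      HasDerivAt.fun_sum (fun v _ => hX v t)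
    convert h1 using 1
    rw [Finset.sum_comm]
    rw [← Finset.sum_fiberwise univ (fun v' => Quotient.mk (MulAction.orbitRel G V) v')
      (fun v' => ∑ v ∈ univ.filter (fun v => Quotient.mk (MulAction.orbitRel G V) v = O),
        k v v' * X t v')]
    apply Finset.sum_congr rfl
    intro O' _
    rw [Finset.mul_sum]
    apply Finset.sum_congr rfl
    intro v' hv'
    simp only [mem_filter, mem_univ, true_and] at hv'
    rw [← Finset.sum_mul]
    congr 1
    exact key_sum_eq G V k hk O (c O') v' (by rw [hc O', ← hv'])
  · intro c' hc' O O'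
    exact key_sum_eq G V k hk O (c O') (c' O') (by rw [hc O', hc' O'])
end
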